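/- The apparent pairs of the simplex-wise refinement of the Vietoris–Rips filtration of a finite metric space X form an acyclic partial matching on VR_∞(X). -/

import Mathlib

set_option maxSynthPendingDepth 2

/-- The diameter of a simplex (finite subset of a metric space). -/
noncomputable def sdiam {X : Type*} [MetricSpace X] (σ : Finset X) : ℝ :=
  Metric.diam (σ : Set X)

/-- The increasingly sorted list of labels of the vertices of a simplex. -/
def labelList {X : Type*} [DecidableEq X] (ψ : X → ℕ) (σ : Finset X) : List ℕ :=
  (σ.image ψ).sort (· ≤ ·)

/-- The length-lexicographic order on simplices: compare first by diameter,
then by dimension (cardinality), then lexicographically on the sorted label lists. -/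
def sLT {X : Type*} [MetricSpace X] [DecidableEq X] (ψ : X → ℕ) (σ τ : Finset X) : Prop :=
  sdiam σ < sdiam τ ∨
    (sdiam σ = sdiam τ ∧
      (σ.card < τ.card ∨
        (σ.card = τ.card ∧ List.Lex (· < ·) (labelList ψ σ) (labelList ψ τ))))

/-- `Covers σ τ`: `σ` covers `τ` in the face poset, i.e. `τ ⊆ σ` in codimension one. -/
def Covers {V : Type*} (σ τ : Finset V) : Prop :=
  τ ⊆ σ ∧ σ.card = τ.card + 1

/-- A partial matching: an involution `μ` on a set `M` of simplices matching each
simplex with a simplex that covers it or that it covers. -/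
structure PartialMatching (V : Type*) where
  M : Set (Finset V)
  μ : Finset V → Finset V
  mem_M : ∀ σ ∈ M, μ σ ∈ M
  invol : ∀ σ ∈ M, μ (μ σ) = σ
  matched : ∀ σ ∈ M, Covers (μ σ) σ ∨ Covers σ (μ σ)

/-- Acyclicity of a partial matching: there is no cyclic sequence
`σ₁ ≻ μ(σ₁) ≺ σ₂ ≻ μ(σ₂) ≺ ⋯ ≺ σ_l ≻ μ(σ_l) ≺ σ₁` with `l ≥ 2` and the `σᵢ` distinct. -/
def PartialMatching.Acyclic {V : Type*} (m : PartialMatching V) : Prop :=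
  ¬ ∃ (l : ℕ) (f : ℕ → Finset V), 2 ≤ l ∧
      (∀ i < l, ∀ j < l, f i = f j → i = j) ∧
      (∀ i < l, f i ∈ m.M ∧ Covers (f i) (m.μ (f i))) ∧
      (∀ i < l, Covers (f ((i + 1) % l)) (m.μ (f i)))

/-- `(τ, σ)` is an apparent pair: `τ` is the latest (in the filtration order) proper face
of `σ`, and `σ` is the earliest proper coface of `τ`. -/
def ApparentPair {X : Type*} [MetricSpace X] [DecidableEq X] (ψ : X → ℕ)
    (τ σ : Finset X) : Prop :=
  τ.Nonempty ∧ τ ⊂ σ ∧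
    (∀ τ' : Finset X, τ'.Nonempty → τ' ⊂ σ → τ' ≠ τ → sLT ψ τ' τ) ∧
    (∀ σ' : Finset X, τ ⊂ σ' → σ' ≠ σ → sLT ψ σ σ')


section Aux

variable {X : Type*} [MetricSpace X] [DecidableEq X] (ψ : X → ℕ)

lemma sdiam_mono {σ τ : Finset X} (h : σ ⊆ τ) : sdiam σ ≤ sdiam τ :=
  Metric.diam_mono h (τ.finite_toSet.isBounded)

lemma sLT_trans {a b c : Finset X} (h1 : sLT ψ a b) (h2 : sLT ψ b c) : sLT ψ a c := by
  unfold sLT at *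
  rcases h1 with h1 | ⟨e1, h1⟩
  · rcases h2 with h2 | ⟨e2, _⟩
    · exact Or.inl (h1.trans h2)
    · exact Or.inl (e2 ▸ h1)
  · rcases h2 with h2 | ⟨e2, h2⟩
    · exact Or.inl (e1 ▸ h2)
    · refine Or.inr ⟨e1.trans e2, ?_⟩
      rcases h1 with h1 | ⟨c1, h1⟩
      · rcases h2 with h2 | ⟨c2, _⟩
        · exact Or.inl (h1.trans h2)
        · exact Or.inl (c2 ▸ h1)
      · rcases h2 with h2 | ⟨c2, h2⟩
        · exact Or.inl (c1 ▸ h2)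
        · exact Or.inr ⟨c1.trans c2, (List.lt_iff_lex_lt _ _).1 (List.lt_trans ((List.lt_iff_lex_lt _ _).2 h1) ((List.lt_iff_lex_lt _ _).2 h2))⟩

lemma sLT_irrefl {a : Finset X} : ¬ sLT ψ a a := by
  unfold sLT
  rintro (h | ⟨_, h | ⟨_, h⟩⟩)
  · exact lt_irrefl _ h
  · exact lt_irrefl _ h
  · exact Std.Asymm.asymm _ _ h h

lemma sLT_asymm {a b : Finset X} (h1 : sLT ψ a b) (h2 : sLT ψ b a) : False :=
  sLT_irrefl ψ (sLT_trans ψ h1 h2)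

lemma ap_covers {τ σ : Finset X} (h : ApparentPair ψ τ σ) : Covers σ τ := by
  obtain ⟨hne, hsub, hmax, _⟩ := h
  refine ⟨hsub.subset, ?_⟩
  have hcard : τ.card < σ.card := Finset.card_lt_card hsub
  by_contra hc
  have h2 : τ.card + 1 < σ.card := by omega
  obtain ⟨x, hxσ, hxτ⟩ := Finset.exists_of_ssubset hsub
  set τ' := insert x τ with hτ'
  have hcard' : τ'.card = τ.card + 1 := Finset.card_insert_of_notMem hxτ
  have hsub' : τ' ⊆ σ := Finset.insert_subset hxσ hsub.subset
  have hss : τ' ⊂ σ := Finset.ssubset_iff_subset_ne.mpr <| And.intro hsub' (by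
    intro h; rw [h] at hcard'; omega)
  have hne' : τ' ≠ τ := by
    intro h; rw [h] at hcard'; omega
  have := hmax τ' ⟨x, Finset.mem_insert_self _ _⟩ hss hne'
  have hd : sdiam τ ≤ sdiam τ' := sdiam_mono (Finset.subset_insert _ _)
  rcases this with h | ⟨_, h | ⟨h, _⟩⟩
  · linarith
  · omega
  · omega

lemma ap_no_both {τ ρ σ : Finset X} (h1 : ApparentPair ψ τ ρ) (h2 : ApparentPair ψ ρ σ) :
    False := by
  have hc1 := ap_covers ψ h1
  have hc2 := ap_covers ψ h2
  obtain ⟨hτne, hτρ, _, hmin⟩ := h1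
  obtain ⟨_, hρσ, hmax, _⟩ := h2
  obtain ⟨b, hbσ, hbρ⟩ := Finset.exists_of_ssubset hρσ
  have hbτ : b ∉ τ := fun h => hbρ (hτρ.subset h)
  set σ' := insert b τ with hσ'
  have hcard' : σ'.card = τ.card + 1 := Finset.card_insert_of_notMem hbτ
  have hne1 : σ' ≠ ρ := by
    intro h
    exact hbρ (h ▸ Finset.mem_insert_self b τ)
  have hsub' : σ' ⊆ σ := Finset.insert_subset hbσ (hτρ.subset.trans hρσ.subset)
  have hss' : σ' ⊂ σ := Finset.ssubset_iff_subset_ne.mpr <| And.intro hsub' (by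
    intro h
    have := hc1.2; have := hc2.2
    rw [← h] at this; omega)
  have hτσ' : τ ⊂ σ' := Finset.ssubset_insert hbτ
  have l1 := hmax σ' ⟨b, Finset.mem_insert_self _ _⟩ hss' hne1
  have l2 := hmin σ' hτσ' hne1
  exact sLT_asymm ψ l1 l2

lemma ap_unique_right {τ σ σ' : Finset X} (h1 : ApparentPair ψ τ σ)
    (h2 : ApparentPair ψ τ σ') : σ = σ' := by
  by_contra hne
  exact sLT_asymm ψ (h1.2.2.2 σ' h2.2.1 (Ne.symm hne)) (h2.2.2.2 σ h1.2.1 hne)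

lemma ap_unique_left {τ τ' σ : Finset X} (h1 : ApparentPair ψ τ σ)
    (h2 : ApparentPair ψ τ' σ) : τ = τ' := by
  by_contra hne
  exact sLT_asymm ψ (h1.2.2.1 τ' h2.1 h2.2.1 (Ne.symm hne)) (h2.2.2.1 τ h1.1 h1.2.1 hne)

end Aux

/-- The apparent pairs of the simplex-wise refinement of the
Vietoris–Rips filtration of a finite metric space `X` form an acyclic partial matching
on `VR_∞(X)` (the collection of all nonempty subsets of `X`). -/
theorem apparentPairs_acyclic_matching (X : Type*) [MetricSpace X] [Fintype X]
    [DecidableEq X] (ψ : X → ℕ) (hinj : Function.Injective ψ)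
    (hrange : ∀ x, ψ x ∈ Finset.Icc 1 (Fintype.card X)) :
    ∃ m : PartialMatching X,
      m.M ⊆ {σ : Finset X | σ.Nonempty} ∧
      m.M = {ρ | (∃ σ, ApparentPair ψ ρ σ) ∨ (∃ τ, ApparentPair ψ τ ρ)} ∧
      (∀ τ σ, ApparentPair ψ τ σ → m.μ τ = σ ∧ m.μ σ = τ) ∧
      m.Acyclic := by
  classical
  set μ : Finset X → Finset X := fun ρ =>
    if h : ∃ σ, ApparentPair ψ ρ σ then h.choose
    else if h2 : ∃ τ, ApparentPair ψ τ ρ then h2.choose else ρ with hμ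
  have μ_left : ∀ {τ σ}, ApparentPair ψ τ σ → μ τ = σ := by
    intro τ σ h
    have hex : ∃ σ, ApparentPair ψ τ σ := ⟨σ, h⟩
    simp only [hμ, dif_pos hex]
    exact ap_unique_right ψ hex.choose_spec h
  have μ_right : ∀ {τ σ}, ApparentPair ψ τ σ → μ σ = τ := by
    intro τ σ h
    have hnex : ¬ ∃ σ', ApparentPair ψ σ σ' := by
      rintro ⟨σ', h'⟩; exact ap_no_both ψ h h'
    have hex : ∃ τ', ApparentPair ψ τ' σ := ⟨τ, h⟩
    simp only [hμ, dif_neg hnex, dif_pos hex]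
    exact ap_unique_left ψ hex.choose_spec h
  refine ⟨⟨{ρ | (∃ σ, ApparentPair ψ ρ σ) ∨ (∃ τ, ApparentPair ψ τ ρ)}, μ, ?_, ?_, ?_⟩,
    ?_, rfl, ?_, ?_⟩
  · rintro ρ (⟨σ, h⟩ | ⟨τ, h⟩)
    · rw [μ_left h]; exact Or.inr ⟨ρ, h⟩
    · rw [μ_right h]; exact Or.inl ⟨ρ, h⟩
  · rintro ρ (⟨σ, h⟩ | ⟨τ, h⟩)
    · rw [μ_left h, μ_right h]
    · rw [μ_right h, μ_left h]
  · rintro ρ (⟨σ, h⟩ | ⟨τ, h⟩)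
    · rw [μ_left h]; exact Or.inl (ap_covers ψ h)
    · rw [μ_right h]; exact Or.inr (ap_covers ψ h)
  · rintro ρ (⟨σ, h⟩ | ⟨τ, h⟩)
    · exact h.1
    · exact h.1.mono h.2.1.subset
  · intro τ σ h
    exact ⟨μ_left h, μ_right h⟩
  · rintro ⟨l, f, hl, hinj', hmem, hcov⟩
    -- each f i is the σ-part of an apparent pair with μ (f i)
    have hap : ∀ i < l, ApparentPair ψ (μ (f i)) (f i) := by
      intro i hi
      obtain ⟨hM, hcv'⟩ := hmem i hi
      have hcv : Covers (f i) (μ (f i)) := hcv'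
      rcases hM with ⟨σ, h⟩ | ⟨τ, h⟩
      · exfalso
        rw [μ_left h] at hcv
        have := (ap_covers ψ h).2
        have := hcv.2
        omega
      · rw [μ_right h]; exact h
    have hmodne : ∀ i < l, (i + 1) % l ≠ i := by
      intro i hi
      rcases Nat.lt_or_ge (i + 1) l with h | h
      · rw [Nat.mod_eq_of_lt h]; omega
      · have : i + 1 = l := by omega
        rw [this, Nat.mod_self]; omega
    have hstep : ∀ i < l, sLT ψ (f i) (f ((i + 1) % l)) := by
      intro i hi
      have hap' := hap i hi
      have hcv : Covers (f ((i + 1) % l)) (μ (f i)) := hcov i hi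
      have hmod : (i + 1) % l < l := Nat.mod_lt _ (by omega)
      have hne : f ((i + 1) % l) ≠ f i := by
        intro h
        exact hmodne i hi (hinj' _ hmod _ hi h)
      have hss : μ (f i) ⊂ f ((i + 1) % l) := by
        refine Finset.ssubset_iff_subset_ne.mpr <| And.intro hcv.1 ?_
        intro h
        have := hcv.2
        rw [h] at this
        omega
      exact hap'.2.2.2 _ hss hne
    -- chain the strict inequalities around the cycle
    have hchain : ∀ i, i < l → sLT ψ (f 0) (f ((i + 1) % l)) := by
      intro i
      induction i with
      | zero => intro _; exact hstep 0 (by omega)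
      | succ n ih =>
        intro hn
        have hn' : n < l := by omega
        have h1 := ih hn'
        rw [Nat.mod_eq_of_lt (by omega : n + 1 < l)] at h1
        exact sLT_trans ψ h1 (hstep (n + 1) hn)
    have := hchain (l - 1) (by omega)
    rw [Nat.sub_add_cancel (by omega : 1 ≤ l), Nat.mod_self] at this
    exact sLT_irrefl ψ this
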